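/- arXiv:2604.18099 — 4 statements merged into one kernel-verified Lean document; each statement's English description precedes it below -/
import Mathlib

section
/- Let A be a finite abelian group of cardinality a, let k ≥ 1, and let M be a natural number with M > k·a·log a. Then there exists a function g : {1,…,M−1}^k → A such that every function f : {1,…,M}^k → A whose k-fold finite difference Δ^(k)(f) equals g is surjective. Here Δ^(k) = ∂₁∘⋯∘∂ₖ where (∂ᵢf)(a₁,…,aᵢ,…,aₖ) := f(a₁,…,aᵢ+1,…,aₖ) − f(a₁,…,aᵢ,…,aₖ). -/
/-- The `i`-th partial difference operator `∂ᵢ`: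
`(∂ᵢ f)(a₁,…,aᵢ,…,aₖ) = f(a₁,…,aᵢ+1,…,aₖ) − f(a₁,…,aᵢ,…,aₖ)`. -/
def partialDiff {k : ℕ} {A : Type*} [AddCommGroup A] (i : Fin k)
    (f : (Fin k → ℕ) → A) : (Fin k → ℕ) → A :=
  fun x => f (Function.update x i (x i + 1)) - f x

/-- The `k`-fold difference operator `Δ^(k) = ∂₁ ∘ ⋯ ∘ ∂ₖ`. -/
def totalDiff {k : ℕ} {A : Type*} [AddCommGroup A]
    (f : (Fin k → ℕ) → A) : (Fin k → ℕ) → A :=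
  (List.ofFn (fun i : Fin k => partialDiff (A := A) i)).foldr (fun d g => d g) f

section SmithAux

open Finset

variable {k : ℕ} {A : Type*} [AddCommGroup A]

/-- corner of the unit cube at `x` indexed by a subset `T`. -/
def smithCnr (x : Fin k → ℕ) (T : Finset (Fin k)) : Fin k → ℕ :=
  fun i => x i + (if i ∈ T then 1 else 0)

def smithListDiff (l : List (Fin k)) (f : (Fin k → ℕ) → A) : (Fin k → ℕ) → A :=
  l.foldr (fun i g => partialDiff i g) f

lemma totalDiff_eq_listDiff (f : (Fin k → ℕ) → A) :
    totalDiff f = smithListDiff (List.finRange k) f := by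
  rw [totalDiff, smithListDiff, List.ofFn_eq_map, List.foldr_map]

lemma smithListDiff_apply (l : List (Fin k)) (hl : l.Nodup) (f : (Fin k → ℕ) → A)
    (x : Fin k → ℕ) :
    smithListDiff l f x
      = ∑ T ∈ l.toFinset.powerset, ((-1 : ℤ) ^ (l.length - T.card)) • f (smithCnr x T) := by
  classical
  induction l generalizing x with
  | nil =>
    have : smithCnr x ∅ = x := by funext j; simp [smithCnr]
    simp [smithListDiff, this]
  | cons i l ih =>
    obtain ⟨hi, hln⟩ := List.nodup_cons.mp hl
    have hi' : i ∉ l.toFinset := by simpa using hi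
    have hLD : smithListDiff (i :: l) f x
        = smithListDiff l f (Function.update x i (x i + 1)) - smithListDiff l f x := rfl
    rw [hLD, ih hln, ih hln, List.toFinset_cons, Finset.sum_powerset_insert hi']
    have h1 : ∑ T ∈ l.toFinset.powerset,
        ((-1 : ℤ) ^ ((i :: l).length - T.card)) • f (smithCnr x T)
        = -∑ T ∈ l.toFinset.powerset,
            ((-1 : ℤ) ^ (l.length - T.card)) • f (smithCnr x T) := by
      rw [← Finset.sum_neg_distrib]
      refine Finset.sum_congr rfl fun T hT => ?_
      have hc : T.card ≤ l.length := by
        have h := Finset.card_le_card (Finset.mem_powerset.mp hT)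
        rwa [List.toFinset_card_of_nodup hln] at h
      have he : (i :: l).length - T.card = (l.length - T.card) + 1 := by
        simp only [List.length_cons]; omega
      rw [he, pow_succ, mul_neg_one, neg_smul]
    have h2 : ∑ T ∈ l.toFinset.powerset,
        ((-1 : ℤ) ^ ((i :: l).length - (insert i T).card)) • f (smithCnr x (insert i T))
        = ∑ T ∈ l.toFinset.powerset,
            ((-1 : ℤ) ^ (l.length - T.card)) • f (smithCnr (Function.update x i (x i + 1)) T) := by
      refine Finset.sum_congr rfl fun T hT => ?_
      have hiT : i ∉ T := fun h => hi' (Finset.mem_powerset.mp hT h)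
      have he : (i :: l).length - (insert i T).card = l.length - T.card := by
        rw [Finset.card_insert_of_notMem hiT]; simp only [List.length_cons]; omega
      have hcn : smithCnr x (insert i T) = smithCnr (Function.update x i (x i + 1)) T := by
        funext j
        by_cases hj : j = i
        · subst hj; simp [smithCnr, hiT, Function.update_self]
        · simp [smithCnr, Function.update_of_ne hj, Finset.mem_insert, hj]
      rw [he, hcn]
    rw [h1, h2]
    abel

lemma totalDiff_apply (f : (Fin k → ℕ) → A) (x : Fin k → ℕ) :
    totalDiff f x
      = ∑ T ∈ (Finset.univ : Finset (Fin k)).powerset,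
          ((-1 : ℤ) ^ (k - T.card)) • f (smithCnr x T) := by
  rw [totalDiff_eq_listDiff, smithListDiff_apply _ (List.nodup_finRange k)]
  simp

lemma smithPairing (w : Finset (Fin k) → A) (i : Fin k)
    (hw : ∀ T : Finset (Fin k), i ∉ T → w (insert i T) = w T) :
    ∑ T ∈ (Finset.univ : Finset (Fin k)).powerset, ((-1 : ℤ) ^ (k - T.card)) • w T = 0 := by
  classical
  have hu : (Finset.univ : Finset (Fin k)) = insert i (Finset.univ.erase i) := by
    rw [Finset.insert_erase (Finset.mem_univ i)]
  rw [hu, Finset.sum_powerset_insert (Finset.notMem_erase i _), ← Finset.sum_add_distrib]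
  apply Finset.sum_eq_zero
  intro T hT
  have hsub := Finset.mem_powerset.mp hT
  have hiT : i ∉ T := fun h => Finset.notMem_erase i _ (hsub h)
  have hck : T.card < k := by
    have h1 := Finset.card_le_card hsub
    have h2 : (Finset.univ.erase i).card = k - 1 := by
      rw [Finset.card_erase_of_mem (Finset.mem_univ i)]; simp
    have h3 : 0 < k := i.2.trans_le (Nat.le_refl k) |>.trans_le' (Nat.zero_le _) |>.trans_le (Nat.le_refl k)
    omega
  rw [hw T hiT, Finset.card_insert_of_notMem hiT, ← add_smul]
  have he : k - T.card = (k - (T.card + 1)) + 1 := by omega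
  rw [he, pow_succ, mul_neg_one]
  simp

lemma totalDiff_sub (f g : (Fin k → ℕ) → A) (x : Fin k → ℕ) :
    totalDiff (fun y => f y - g y) x = totalDiff f x - totalDiff g x := by
  simp only [totalDiff_apply, smul_sub, Finset.sum_sub_distrib]

lemma totalDiff_neg (f : (Fin k → ℕ) → A) (x : Fin k → ℕ) :
    totalDiff (fun y => -f y) x = -totalDiff f x := by
  simp only [totalDiff_apply, smul_neg, Finset.sum_neg_distrib]

lemma totalDiff_zsmul (c : ℤ) (f : (Fin k → ℕ) → A) (x : Fin k → ℕ) :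
    totalDiff (fun y => c • f y) x = c • totalDiff f x := by
  simp only [totalDiff_apply, Finset.smul_sum, smul_comm c]

lemma totalDiff_finsum {ι : Type*} (s : Finset ι) (v : ι → (Fin k → ℕ) → A) (x : Fin k → ℕ) :
    totalDiff (fun y => ∑ j ∈ s, v j y) x = ∑ j ∈ s, totalDiff (v j) x := by
  simp only [totalDiff_apply, Finset.smul_sum]
  rw [Finset.sum_comm]

lemma totalDiff_indep (u : (Fin k → ℕ) → A) (i : Fin k)
    (hu : ∀ (y : Fin k → ℕ) (t : ℕ), u (Function.update y i t) = u y) (x : Fin k → ℕ) :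
    totalDiff u x = 0 := by
  rw [totalDiff_apply]
  apply smithPairing (fun T => u (smithCnr x T)) i
  intro T hiT
  have hwc : smithCnr x (insert i T) = Function.update (smithCnr x T) i (x i + 1) := by
    funext j
    by_cases hj : j = i
    · subst hj; simp [smithCnr, hiT, Function.update_self]
    · simp [smithCnr, Function.update_of_ne hj, Finset.mem_insert, hj]
  rw [hwc, hu]

lemma totalDiff_const (hk : 1 ≤ k) (c : A) (x : Fin k → ℕ) :
    totalDiff (fun _ : Fin k → ℕ => c) x = 0 :=
  totalDiff_indep (fun _ => c) ⟨0, hk⟩ (fun _ _ => rfl) x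

/-- The corner of the box `[1,y]` indexed by `T`: coordinates in `T` stay `y i`, others are `1`. -/
def smithCor {k : ℕ} (T : Finset (Fin k)) (y : Fin k → ℕ) : Fin k → ℕ :=
  fun i => if i ∈ T then y i else 1

lemma smithVanish {M : ℕ} (h : (Fin k → ℕ) → A)
    (hbox : ∀ x, (∀ i, 1 ≤ x i ∧ x i ≤ M - 1) → totalDiff h x = 0)
    (hbdry : ∀ y, (∀ i, 1 ≤ y i ∧ y i ≤ M) → (∃ i, y i = 1) → h y = 0) :
    ∀ y, (∀ i, 1 ≤ y i ∧ y i ≤ M) → h y = 0 := by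
  classical
  have key : ∀ n, ∀ y : Fin k → ℕ, (∑ i, y i) = n → (∀ i, 1 ≤ y i ∧ y i ≤ M) → h y = 0 := by
    intro n
    induction n using Nat.strong_induction_on with
    | _ n IH =>
      intro y hsum hy
      by_cases hb : ∃ i, y i = 1
      · exact hbdry y hy hb
      push_neg at hb
      have hy2 : ∀ i, 2 ≤ y i := by
        intro i; have h1 := (hy i).1; have h2 := hb i; omega
      have h0 := hbox (fun i => y i - 1) (by
        intro i; have h1 := hy2 i; have h2 := (hy i).2
        show 1 ≤ y i - 1 ∧ y i - 1 ≤ M - 1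
        omega)
      rw [totalDiff_apply] at h0
      have huniv : (Finset.univ : Finset (Fin k)) ∈ (Finset.univ : Finset (Fin k)).powerset :=
        Finset.mem_powerset.mpr (le_refl _)
      rw [← Finset.sum_erase_add _ _ huniv] at h0
      have hz : ∑ T ∈ ((Finset.univ : Finset (Fin k)).powerset.erase Finset.univ),
          ((-1 : ℤ) ^ (k - T.card)) • h (smithCnr (fun i => y i - 1) T) = 0 := by
        apply Finset.sum_eq_zero
        intro T hT
        obtain ⟨hne, _⟩ := Finset.mem_erase.mp hT
        obtain ⟨i, hi⟩ : ∃ i, i ∉ T := by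
          by_contra hc; push_neg at hc; exact hne (Finset.eq_univ_iff_forall.mpr hc)
        have hmem : ∀ j, 1 ≤ smithCnr (fun i => y i - 1) T j ∧ smithCnr (fun i => y i - 1) T j ≤ M := by
          intro j; have h1 := hy2 j; have h2 := (hy j).2
          by_cases hj : j ∈ T <;> simp [smithCnr, hj] <;> omega
        have hlt : (∑ j, smithCnr (fun i => y i - 1) T j) < n := by
          rw [← hsum]
          apply Finset.sum_lt_sum
          · intro j _; have h1 := hy2 j
            by_cases hj : j ∈ T <;> simp [smithCnr, hj] <;> omega
          · refine ⟨i, Finset.mem_univ i, ?_⟩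
            have h1 := hy2 i; simp [smithCnr, hi]; omega
        rw [IH _ hlt _ rfl hmem, smul_zero]
      rw [hz, zero_add] at h0
      have hcnr : smithCnr (fun i => y i - 1) Finset.univ = y := by
        funext j; have := hy2 j; simp [smithCnr]; omega
      rw [hcnr] at h0
      simpa using h0
  intro y hy; exact key (∑ i, y i) y rfl hy

/-- Structure theorem: a function whose total difference vanishes on the box is determined
on the box by its boundary values, via the alternating corner sum. -/
lemma smithStructure {M : ℕ} (hk : 1 ≤ k) (W : (Fin k → ℕ) → A)
    (hW : ∀ x, (∀ i, 1 ≤ x i ∧ x i ≤ M - 1) → totalDiff W x = 0) :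
    ∀ y, (∀ i, 1 ≤ y i ∧ y i ≤ M) →
      W y = -∑ T ∈ ((Finset.univ : Finset (Fin k)).powerset.erase Finset.univ),
              ((-1 : ℤ) ^ (k - T.card)) • W (smithCor T y) := by
  classical
  set er := ((Finset.univ : Finset (Fin k)).powerset.erase Finset.univ) with her
  set E : (Fin k → ℕ) → A := fun y =>
    -∑ T ∈ er, ((-1 : ℤ) ^ (k - T.card)) • W (smithCor T y) with hE
  -- each corner term is independent of some coordinate
  have hEdiff : ∀ x, totalDiff E x = 0 := by
    intro x
    have h1 : totalDiff (fun y => ∑ T ∈ er, ((-1 : ℤ) ^ (k - T.card)) • W (smithCor T y)) x = 0 := by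
      rw [totalDiff_finsum]
      apply Finset.sum_eq_zero
      intro T hT
      obtain ⟨hne, _⟩ := Finset.mem_erase.mp hT
      obtain ⟨i, hi⟩ : ∃ i, i ∉ T := by
        by_contra hc; push_neg at hc; exact hne (Finset.eq_univ_iff_forall.mpr hc)
      rw [totalDiff_zsmul]
      have : totalDiff (fun y => W (smithCor T y)) x = 0 := by
        apply totalDiff_indep _ i
        intro y t
        congr 1
        funext j
        by_cases hj : j = i
        · subst hj; simp [smithCor, hi]
        · simp [smithCor, Function.update_of_ne hj]
      rw [this, smul_zero]
    have := totalDiff_neg (fun y => ∑ T ∈ er, ((-1 : ℤ) ^ (k - T.card)) • W (smithCor T y)) x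
    rw [hE]
    rw [this, h1, neg_zero]
  -- on the boundary E agrees with W
  have hEbdry : ∀ y : Fin k → ℕ, (∃ i, y i = 1) → W y - E y = 0 := by
    intro y ⟨i, hi⟩
    have hp : ∑ T ∈ (Finset.univ : Finset (Fin k)).powerset,
        ((-1 : ℤ) ^ (k - T.card)) • W (smithCor T y) = 0 := by
      apply smithPairing (fun T => W (smithCor T y)) i
      intro T hiT
      congr 1
      funext j
      by_cases hj : j = i
      · subst hj; simp [smithCor, hi, hiT]
      · simp [smithCor, Finset.mem_insert, hj]
    have huniv : (Finset.univ : Finset (Fin k)) ∈ (Finset.univ : Finset (Fin k)).powerset :=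
      Finset.mem_powerset.mpr (le_refl _)
    rw [← Finset.sum_erase_add _ _ huniv] at hp
    have hcor : smithCor Finset.univ y = y := by
      funext j; simp [smithCor]
    rw [hcor] at hp
    simp only [Finset.card_univ, Fintype.card_fin, Nat.sub_self, pow_zero, one_smul] at hp
    have hEy : E y = -∑ T ∈ er, ((-1 : ℤ) ^ (k - T.card)) • W (smithCor T y) := rfl
    rw [hEy, sub_neg_eq_add, her, add_comm]
    exact hp
  intro y hy
  have hsub : ∀ y, (∀ i, 1 ≤ y i ∧ y i ≤ M) → W y - E y = 0 := by
    apply smithVanish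
    · intro x hx
      rw [totalDiff_sub, hW x hx, hEdiff, sub_zero]
    · intro y _ hb; exact hEbdry y hb
  exact sub_eq_zero.mp (hsub y hy)

lemma smithArith (k M a : ℕ) (hk : 1 ≤ k) (ha : 1 ≤ a)
    (hM : (M : ℝ) > (k : ℝ) * (a : ℝ) * Real.log a) :
    (a - 1) ^ (M ^ k) < a ^ ((M - 1) ^ k) := by
  have hM1 : 1 ≤ M := by
    have hlog : 0 ≤ Real.log a := Real.log_nonneg (by exact_mod_cast ha)
    have h0 : (0 : ℝ) ≤ (k : ℝ) * (a : ℝ) * Real.log a := by positivity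
    have : (0 : ℝ) < (M : ℝ) := lt_of_le_of_lt h0 hM
    exact_mod_cast this
  rcases Nat.lt_or_ge a 2 with h2 | h2
  · -- a = 1
    have haa : a = 1 := by omega
    subst haa
    have hMk : 0 < M ^ k := pow_pos (by omega) k
    simpa [Nat.zero_pow hMk] using Nat.one_pos
  · -- a ≥ 2
    have ha' : (2 : ℝ) ≤ (a : ℝ) := by exact_mod_cast h2
    have hk' : (1 : ℝ) ≤ (k : ℝ) := by exact_mod_cast hk
    have hlog2 : (0.6931471803 : ℝ) < Real.log 2 := Real.log_two_gt_d9
    have hla : Real.log 2 ≤ Real.log a := Real.log_le_log (by norm_num) ha'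
    have hla0 : (0 : ℝ) ≤ Real.log a := by linarith
    have hM2 : 2 ≤ M := by
      have hka : (2 : ℝ) ≤ (k : ℝ) * (a : ℝ) := by nlinarith
      have h1 : (2 : ℝ) * Real.log 2 ≤ (k : ℝ) * (a : ℝ) * Real.log a := by nlinarith
      have : (1 : ℝ) < (M : ℝ) := by nlinarith
      exact_mod_cast this
  
    obtain ⟨k', rfl⟩ : ∃ k', k = k' + 1 := ⟨k - 1, by omega⟩
    set x : ℝ := (a : ℝ) with hx
    set m : ℝ := (M : ℝ) with hm
    have hm2 : (2 : ℝ) ≤ m := by rw [hm]; exact_mod_cast hM2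
    have hm0 : (0 : ℝ) < m := by linarith
    have hx0 : (0 : ℝ) < x := by linarith
    have hx1 : (0 : ℝ) < x - 1 := by linarith
    have hlogx0 : 0 ≤ Real.log x := Real.log_nonneg (by linarith)
    -- step 1 : log (x-1) ≤ log x - 1/x
    have hs1 : Real.log (x - 1) ≤ Real.log x - 1 / x := by
      have h := Real.log_le_sub_one_of_pos (x := (x - 1) / x) (by positivity)
      rw [Real.log_div (by linarith) (by linarith)] at h
      have he : (x - 1) / x - 1 = -(1 / x) := by field_simp; ring
      rw [he] at h
      linarith
    -- step 2 (strict) : (k'+1) * m^k' * log x  <  m^(k'+1) / x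
    have hs2 : ((k' : ℝ) + 1) * m ^ k' * Real.log x < m ^ (k' + 1) / x := by
      have hmm : m ^ (k' + 1) = m ^ k' * m := pow_succ m k'
      have hmp : (0 : ℝ) < m ^ k' := pow_pos hm0 k'
      have hdiv : ((k' : ℝ) + 1) * Real.log x < m / x := by
        rw [lt_div_iff₀ hx0]
        calc ((k' : ℝ) + 1) * Real.log x * x = ((k' + 1 : ℕ) : ℝ) * x * Real.log x := by
              push_cast; ring
        _ < m := hM
      calc ((k' : ℝ) + 1) * m ^ k' * Real.log x
          = m ^ k' * (((k' : ℝ) + 1) * Real.log x) := by ring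
      _ < m ^ k' * (m / x) := (mul_lt_mul_iff_right₀ hmp).mpr hdiv
      _ = m ^ (k' + 1) / x := by rw [hmm]; ring
    -- step 3 : Bernoulli
    have hs3 : m ^ (k' + 1) - ((k' : ℝ) + 1) * m ^ k' ≤ (m - 1) ^ (k' + 1) := by
      have h1m : 1 / m ≤ 1 := by rw [div_le_one hm0]; linarith
      have hb := one_add_mul_le_pow (a := -(1 / m)) (by linarith : (-2 : ℝ) ≤ -(1 / m)) (k' + 1)
      have hmul := mul_le_mul_of_nonneg_right hb (le_of_lt (pow_pos hm0 (k' + 1)))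
      have hr : (1 + -(1 / m)) ^ (k' + 1) * m ^ (k' + 1) = (m - 1) ^ (k' + 1) := by
        rw [← mul_pow]; congr 1; field_simp; ring
      have hl : (1 + ((k' + 1 : ℕ) : ℝ) * -(1 / m)) * m ^ (k' + 1)
          = m ^ (k' + 1) - ((k' : ℝ) + 1) * m ^ k' := by
        rw [pow_succ]
        push_cast
        field_simp
        ring
      rw [hr, hl] at hmul
      exact hmul
    -- main log inequality
    have hc2 : (((M - 1) ^ (k' + 1) : ℕ) : ℝ) = (m - 1) ^ (k' + 1) := by
      rw [Nat.cast_pow, Nat.cast_sub hM1, Nat.cast_one]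
    have hc1 : ((M ^ (k' + 1) : ℕ) : ℝ) = m ^ (k' + 1) := by rw [Nat.cast_pow]
    have hmain : ((M ^ (k' + 1) : ℕ) : ℝ) * Real.log (x - 1)
        < (((M - 1) ^ (k' + 1) : ℕ) : ℝ) * Real.log x := by
      rw [hc1, hc2]
      have hmp1 : (0 : ℝ) ≤ m ^ (k' + 1) := le_of_lt (pow_pos hm0 _)
      calc m ^ (k' + 1) * Real.log (x - 1)
          ≤ m ^ (k' + 1) * (Real.log x - 1 / x) := mul_le_mul_of_nonneg_left hs1 hmp1
      _ = m ^ (k' + 1) * Real.log x - m ^ (k' + 1) / x := by ring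
      _ < m ^ (k' + 1) * Real.log x - ((k' : ℝ) + 1) * m ^ k' * Real.log x := by linarith
      _ = (m ^ (k' + 1) - ((k' : ℝ) + 1) * m ^ k') * Real.log x := by ring
      _ ≤ (m - 1) ^ (k' + 1) * Real.log x := mul_le_mul_of_nonneg_right hs3 hlogx0
    have hfin : (x - 1) ^ (M ^ (k' + 1)) < x ^ ((M - 1) ^ (k' + 1)) := by
      rw [← Real.log_lt_log_iff (pow_pos hx1 _) (pow_pos hx0 _), Real.log_pow, Real.log_pow]
      exact hmain
    have hca : ((a - 1 : ℕ) : ℝ) = x - 1 := by rw [Nat.cast_sub ha, Nat.cast_one]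
    rw [← hca, hx] at hfin
    exact_mod_cast hfin

lemma smithCardNe (B : Type*) [Fintype B] [AddCommGroup B] [DecidableEq B] :
    Fintype.card {v : B // v ≠ (0 : B)} = Fintype.card B - 1 := by
  classical
  have h := Fintype.card_subtype_compl (fun v : B => v = 0)
  have h1 : Fintype.card {v : B // v = 0} = 1 := Fintype.card_subtype_eq (0 : B)
  rw [h1] at h
  convert h using 2

lemma smithCardBdd (k M : ℕ) (hM : 1 ≤ M) :
    Fintype.card {x : Fin k → Fin M // ∃ i, (x i : ℕ) = 0} = M ^ k - (M - 1) ^ k := by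
  classical
  have hone : Fintype.card {j : Fin M // (j : ℕ) = 0} = 1 := by
    rw [Fintype.card_eq_one_iff]
    refine ⟨⟨⟨0, hM⟩, rfl⟩, ?_⟩
    rintro ⟨j, hj⟩
    exact Subtype.ext (Fin.ext hj)
  have hcoord : Fintype.card {j : Fin M // ¬ (j : ℕ) = 0} = M - 1 := by
    rw [Fintype.card_subtype_compl, hone, Fintype.card_fin]
  have hAll : Fintype.card {x : Fin k → Fin M // ∀ i, ¬ (x i : ℕ) = 0} = (M - 1) ^ k := by
    have e : {x : Fin k → Fin M // ∀ i, ¬ (x i : ℕ) = 0} ≃ (Fin k → {j : Fin M // ¬ (j : ℕ) = 0}) :=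
      Equiv.subtypePiEquivPi (p := fun (_ : Fin k) (j : Fin M) => ¬ (j : ℕ) = 0)
    rw [Fintype.card_congr e, Fintype.card_fun, hcoord, Fintype.card_fin]
  have e2 : {x : Fin k → Fin M // ∃ i, (x i : ℕ) = 0}
      ≃ {x : Fin k → Fin M // ¬ ∀ i, ¬ (x i : ℕ) = 0} :=
    Equiv.subtypeEquivRight (by intro x; push_neg; rfl)
  rw [Fintype.card_congr e2, Fintype.card_subtype_compl, hAll, Fintype.card_fun,
    Fintype.card_fin, Fintype.card_fin]

end SmithAux

/-- Smith's combinatorial lemma: if `A` is a finite abelian group of cardinality `a`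
and `M > k·a·log a`, then there is a prescribed difference function
`g : {1,…,M−1}^k → A` such that every `f : {1,…,M}^k → A` with `Δ^(k)(f) = g`
(on the box `{1,…,M−1}^k`) is surjective (on the box `{1,…,M}^k`). -/
theorem stmt0 {A : Type*} [AddCommGroup A] [Fintype A] (k M : ℕ) (hk : 1 ≤ k)
    (hM : (M : ℝ) > (k : ℝ) * (Fintype.card A : ℝ) * Real.log (Fintype.card A)) :
    ∃ g : (Fin k → ℕ) → A,
      ∀ f : (Fin k → ℕ) → A,
        (∀ x : Fin k → ℕ, (∀ i, 1 ≤ x i ∧ x i ≤ M - 1) → totalDiff f x = g x) →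
        ∀ a : A, ∃ x : Fin k → ℕ, (∀ i, 1 ≤ x i ∧ x i ≤ M) ∧ f x = a := by
  classical
  have ha1 : 1 ≤ Fintype.card A := Fintype.card_pos
  have hM1 : 1 ≤ M := by
    have hlog : 0 ≤ Real.log (Fintype.card A) := Real.log_nonneg (by exact_mod_cast ha1)
    have h0 : (0 : ℝ) ≤ (k : ℝ) * (Fintype.card A : ℝ) * Real.log (Fintype.card A) := by
      have hk0 : (0:ℝ) ≤ (k:ℝ) := Nat.cast_nonneg k
      have ha0 : (0:ℝ) ≤ (Fintype.card A : ℝ) := Nat.cast_nonneg _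
      exact mul_nonneg (mul_nonneg hk0 ha0) hlog
    have : (0 : ℝ) < (M : ℝ) := lt_of_le_of_lt h0 hM
    exact_mod_cast this
  set N := M - 1 with hN
  set S : ((Fin k → Fin N) → A) → (Fin k → ℕ) → A := fun σ y =>
    if h : ∀ i, 2 ≤ y i ∧ y i ≤ M then
      σ (fun i => ⟨y i - 2, by have h1 := (h i).1; have h2 := (h i).2; omega⟩)
    else 0 with hS
  suffices hgood : ∃ σ : (Fin k → Fin N) → A, ∀ f : (Fin k → ℕ) → A,
      (∀ x : Fin k → ℕ, (∀ i, 1 ≤ x i ∧ x i ≤ M - 1) → totalDiff f x = totalDiff (S σ) x) →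
      ∀ v : A, ∃ x : Fin k → ℕ, (∀ i, 1 ≤ x i ∧ x i ≤ M) ∧ f x = v by
    obtain ⟨σ, hσ⟩ := hgood
    exact ⟨totalDiff (S σ), hσ⟩
  by_contra hbad
  push_neg at hbad
  choose f hf using hbad
  have hcond : ∀ σ, ∀ x : Fin k → ℕ, (∀ i, 1 ≤ x i ∧ x i ≤ M - 1) →
      totalDiff (f σ) x = totalDiff (S σ) x := fun σ => (hf σ).1
  choose v hv using fun σ => (hf σ).2
  set F : ((Fin k → Fin N) → A) → (Fin k → ℕ) → A := fun σ y => f σ y - v σ with hF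
  have hF2 : ∀ σ y, (∀ i, 1 ≤ y i ∧ y i ≤ M) → F σ y ≠ 0 := by
    intro σ y hy h0
    exact hv σ y hy (sub_eq_zero.mp h0)
  have hFd : ∀ σ x, (∀ i, 1 ≤ x i ∧ x i ≤ M - 1) →
      totalDiff (fun y => F σ y - S σ y) x = 0 := by
    intro σ x hx
    rw [totalDiff_sub]
    have h1 : totalDiff (F σ) x = totalDiff (f σ) x := by
      have h2 := totalDiff_sub (f σ) (fun _ => v σ) x
      rw [totalDiff_const hk, sub_zero] at h2
      exact h2
    rw [h1, hcond σ x hx, sub_self]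
  set er := ((Finset.univ : Finset (Fin k)).powerset.erase Finset.univ) with her
  have hstar : ∀ σ y, (∀ i, 1 ≤ y i ∧ y i ≤ M) →
      F σ y - S σ y = -∑ T ∈ er, ((-1 : ℤ) ^ (k - T.card)) •
        (F σ (smithCor T y) - S σ (smithCor T y)) :=
    fun σ => smithStructure hk _ (hFd σ)
  have hSbd : ∀ σ y, ¬(∀ i, 2 ≤ y i ∧ y i ≤ M) → S σ y = 0 := by
    intro σ y h
    exact dif_neg h
  have hercor : ∀ T ∈ er, ∃ i, i ∉ T := by
    intro T hT
    obtain ⟨hne, -⟩ := Finset.mem_erase.mp hT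
    by_contra hc; push_neg at hc; exact hne (Finset.eq_univ_iff_forall.mpr hc)
  have hScor : ∀ σ, ∀ T ∈ er, ∀ y, S σ (smithCor T y) = 0 := by
    intro σ T hT y
    obtain ⟨i, hi⟩ := hercor T hT
    apply hSbd
    intro hall
    have h1 := (hall i).1
    simp [smithCor, hi] at h1
  -- the key identity : σ's values are recoverable from F on the grid
  have hkey : ∀ σ y, (∀ i, 1 ≤ y i ∧ y i ≤ M) →
      S σ y = F σ y + ∑ T ∈ er, ((-1 : ℤ) ^ (k - T.card)) • F σ (smithCor T y) := by
    intro σ y hy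
    have h1 := hstar σ y hy
    have h2 : ∑ T ∈ er, ((-1 : ℤ) ^ (k - T.card)) • (F σ (smithCor T y) - S σ (smithCor T y))
        = ∑ T ∈ er, ((-1 : ℤ) ^ (k - T.card)) • F σ (smithCor T y) := by
      refine Finset.sum_congr rfl fun T hT => ?_
      rw [hScor σ T hT y, sub_zero]
    rw [h2] at h1
    calc S σ y = F σ y - (F σ y - S σ y) := by abel
    _ = F σ y + ∑ T ∈ er, ((-1 : ℤ) ^ (k - T.card)) • F σ (smithCor T y) := by
        rw [h1, sub_neg_eq_add]
  -- the injection
  have hbound1 : ∀ (x : {x : Fin k → Fin M // ∃ i, (x i : ℕ) = 0}) (i : Fin k),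
      1 ≤ (x.1 i : ℕ) + 1 ∧ (x.1 i : ℕ) + 1 ≤ M := by
    intro x i; have := (x.1 i).2; omega
  have hbound2 : ∀ (z : Fin k → Fin N) (i : Fin k),
      1 ≤ (z i : ℕ) + 2 ∧ (z i : ℕ) + 2 ≤ M := by
    intro z i; have := (z i).2; omega
  set Θ : ((Fin k → Fin N) → A) →
      ({x : Fin k → Fin M // ∃ i, (x i : ℕ) = 0} → {w : A // w ≠ 0})
        × ((Fin k → Fin N) → {w : A // w ≠ 0}) := fun σ =>
    (fun x => ⟨F σ (fun i => (x.1 i : ℕ) + 1), hF2 σ _ (hbound1 x)⟩,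
     fun z => ⟨F σ (fun i => (z i : ℕ) + 2), hF2 σ _ (hbound2 z)⟩) with hΘ
  have hinj : Function.Injective Θ := by
    intro σ₁ σ₂ he
    have hfst := congrArg Prod.fst he
    have hsnd := congrArg Prod.snd he
    funext z
    set y : Fin k → ℕ := fun i => (z i : ℕ) + 2 with hy'
    have hy : ∀ i, 1 ≤ y i ∧ y i ≤ M := by
      intro i; have h1 : y i = (z i : ℕ) + 2 := rfl; have := (z i).2; omega
    have hSin : ∀ σ, S σ y = σ z := by
      intro σ
      have hcy : ∀ i, 2 ≤ y i ∧ y i ≤ M := by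
        intro i; have h1 : y i = (z i : ℕ) + 2 := rfl; have := (z i).2; omega
      exact dif_pos hcy
    have hFy : F σ₁ y = F σ₂ y := by
      have := congrFun hsnd z
      exact congrArg Subtype.val this
    have hFcor : ∀ T ∈ er, F σ₁ (smithCor T y) = F σ₂ (smithCor T y) := by
      intro T hT
      obtain ⟨i₀, hi₀⟩ := hercor T hT
      have hvlt : ∀ i, smithCor T y i - 1 < M := by
        intro i
        have hz := (z i).2
        by_cases hi : i ∈ T <;> simp [smithCor, hi, hy'] <;> omega
      set xT : {x : Fin k → Fin M // ∃ i, (x i : ℕ) = 0} :=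
        ⟨fun i => ⟨smithCor T y i - 1, hvlt i⟩, ⟨i₀, by simp [smithCor, hi₀]⟩⟩ with hxT
      have hdec : (fun i => ((xT.1 i : ℕ) + 1)) = smithCor T y := by
        funext i
        show smithCor T y i - 1 + 1 = smithCor T y i
        have h1 : 1 ≤ smithCor T y i := by
          by_cases hi : i ∈ T <;> simp [smithCor, hi, hy'] <;> omega
        omega
      have := congrFun hfst xT
      have h2 : F σ₁ (fun i => ((xT.1 i : ℕ) + 1)) = F σ₂ (fun i => ((xT.1 i : ℕ) + 1)) :=
        congrArg Subtype.val this
      rwa [hdec] at h2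
    have h1 := hkey σ₁ y hy
    have h2 := hkey σ₂ y hy
    rw [hSin σ₁] at h1
    rw [hSin σ₂] at h2
    rw [h1, h2, hFy]
    congr 1
    exact Finset.sum_congr rfl fun T hT => by rw [hFcor T hT]
  -- cardinality contradiction
  have hcard := Fintype.card_le_of_injective Θ hinj
  clear hΘ hinj
  clear Θ
  have hc1 : Fintype.card ((Fin k → Fin N) → A) = Fintype.card A ^ (N ^ k) := by
    rw [Fintype.card_fun, Fintype.card_fun, Fintype.card_fin, Fintype.card_fin]
  have hc2 : Fintype.card (({x : Fin k → Fin M // ∃ i, (x i : ℕ) = 0} → {w : A // w ≠ 0})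
        × ((Fin k → Fin N) → {w : A // w ≠ 0}))
      = (Fintype.card A - 1) ^ (M ^ k - N ^ k) * (Fintype.card A - 1) ^ (N ^ k) := by
    rw [Fintype.card_prod, Fintype.card_fun, Fintype.card_fun, smithCardNe,
      smithCardBdd k M hM1, Fintype.card_fun, Fintype.card_fin, Fintype.card_fin, hN]
  rw [hc1, hc2, ← pow_add] at hcard
  have hle : N ^ k ≤ M ^ k := Nat.pow_le_pow_left (hN ▸ Nat.sub_le M 1) k
  rw [Nat.sub_add_cancel hle] at hcard
  have harith := smithArith k M (Fintype.card A) hk ha1 hM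
  rw [← hN] at harith
  exact absurd hcard (not_le.mpr harith)
end

section
/- Let G be a profinite group, H an open subgroup, M a discrete G-module, and k a natural number. If α ∈ Z^k(G, M) is a continuous cocycle whose restriction to Z^k(H, M) is a coboundary, then α is cohomologous (in Z^k(G,M)) to a cocycle whose restriction to Z^k(H, M) is identically zero. -/
/-- The differential on inhomogeneous group cochains
`d : C^n(G,M) → C^{n+1}(G,M)`. -/
def gd {G M : Type*} [Group G] [AddCommGroup M] [DistribMulAction G M] (n : ℕ)
    (x : (Fin n → G) → M) : (Fin (n + 1) → G) → M :=
  fun g => g 0 • x (fun i => g i.succ)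
    + ∑ j : Fin (n + 1), ((-1 : ℤ) ^ ((j : ℕ) + 1)) • x (Fin.contractNth j (· * ·) g)

lemma contractNth_coe {G : Type*} [Group G] (H : Subgroup G) {n : ℕ} (j : Fin (n + 1))
    (h : Fin (n + 1) → H) :
    Fin.contractNth j (· * ·) (fun i => (h i : G))
      = fun i => ((Fin.contractNth j (· * ·) h i : H) : G) := by
  funext i
  simp only [Fin.contractNth]
  split_ifs <;> simp

/-- Let `G` be a profinite group, `H` an open subgroup, and `M` a discrete `G`-module.
Any continuous cocycle `α ∈ Z^{k+1}(G,M)` whose restriction to `Z^{k+1}(H,M)` is a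
coboundary (of a continuous cochain) is cohomologous, by a continuous cochain `γ`, to a
cocycle `α − dγ` whose restriction to `H` vanishes identically. -/
theorem stmt3 {G : Type*} [Group G] [TopologicalSpace G] [IsTopologicalGroup G]
    [CompactSpace G] [TotallyDisconnectedSpace G] [T2Space G]
    (H : Subgroup G) (hH : IsOpen (H : Set G))
    {M : Type*} [AddCommGroup M] [DistribMulAction G M]
    [TopologicalSpace M] [DiscreteTopology M] [ContinuousSMul G M]
    (k : ℕ) (α : (Fin (k + 1) → G) → M) (hcont : Continuous α)
    (hcocycle : gd (k + 1) α = 0)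
    (hβ : ∃ β : (Fin k → H) → M, Continuous β ∧
      gd k β = fun h : Fin (k + 1) → H => α (fun i => (h i : G))) :
    ∃ γ : (Fin k → G) → M, Continuous γ ∧
      ∀ h : Fin (k + 1) → H, (α - gd k γ) (fun i => (h i : G)) = 0 := by
  classical
  obtain ⟨β, hβcont, hβd⟩ := hβ
  set S : Set (Fin k → G) := {g | ∀ i, g i ∈ H} with hSdef
  have hSeq : S = ⋂ i, (fun g : Fin k → G => g i) ⁻¹' (H : Set G) := by
    ext g; simp [hSdef, Set.mem_iInter]
  have hSopen : IsOpen S := by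
    rw [hSeq]
    exact isOpen_iInter_of_finite fun i => hH.preimage (continuous_apply i)
  have hSclosed : IsClosed S := by
    rw [hSeq]
    exact isClosed_iInter fun i =>
      (H.isClosed_of_isOpen hH).preimage (continuous_apply i)
  set γ : (Fin k → G) → M :=
    fun g => if hg : ∀ i, g i ∈ H then β (fun i => ⟨g i, hg i⟩) else 0 with hγdef
  have hγS : ∀ (g : Fin k → G) (hg : ∀ i, g i ∈ H),
      γ g = β (fun i => ⟨g i, hg i⟩) := by
    intro g hg; simp [hγdef, hg]
  have hγcont : Continuous γ := by
    rw [continuous_iff_continuousAt]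
    intro g
    by_cases hg : g ∈ S
    · have hcS : ContinuousOn γ S := by
        rw [continuousOn_iff_continuous_restrict]
        have : S.domRestrict γ = β ∘ fun (p : S) (i : Fin k) => (⟨p.1 i, p.2 i⟩ : H) := by
          funext p
          exact hγS p.1 p.2
        rw [this]
        exact hβcont.comp (continuous_pi fun i =>
          Continuous.subtype_mk (by exact (continuous_apply i).comp continuous_subtype_val) _)
      exact hcS.continuousAt (hSopen.mem_nhds hg)
    · have : γ =ᶠ[nhds g] fun _ => 0 := by
        filter_upwards [hSclosed.isOpen_compl.mem_nhds hg] with x hx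
        have hx' : ¬ ∀ i, x i ∈ H := hx
        simp [hγdef, hx']
      exact (continuousAt_const).congr this.symm
  refine ⟨γ, hγcont, fun h => ?_⟩
  have key : gd k γ (fun i => (h i : G)) = gd k β h := by
    simp only [gd]
    congr 1
    · have h1 : (fun i : Fin k => ((h i.succ : H) : G)) =
        fun i : Fin k => ((fun i => (h i : G)) i.succ) := rfl
      rw [hγS _ (fun i => (h i.succ).2)]
      rfl
    · refine Finset.sum_congr rfl fun j _ => ?_
      rw [contractNth_coe H j h]
      rw [hγS _ (fun i => (Fin.contractNth j (· * ·) h i).2)]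
  have := congrFun hβd h
  simp only [Pi.sub_apply, key, this, sub_self]
end

section
/- Let F be a field of characteristic 0, n a natural number, and u ∈ F* such that the polynomial T^n − u is irreducible over F(μ_n) (the field obtained by adjoining all n-th roots of unity). Set F' = F(u^{1/n}). Then the maximal abelian subextension of F'/F is F(u^{1/m}), where m is the maximal divisor of n such that μ_m ⊆ F*. -/
open IntermediateField Polynomial



/-- An automorphism fixing `F` and a set `S` pointwise fixes `adjoin F S` pointwise. -/
lemma aux_fix_adjoin {F Ω : Type*} [Field F] [Field Ω] [Algebra F Ω]
    (σ : Ω ≃ₐ[F] Ω) (S : Set Ω) (hS : ∀ y ∈ S, σ y = y) :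
    ∀ x ∈ adjoin F S, σ x = x := by
  intro x hx
  induction hx using IntermediateField.adjoin_induction with
  | mem y hy => exact hS y hy
  | algebraMap y => exact σ.commutes y
  | add y z _ _ hy hz => rw [map_add, hy, hz]
  | inv y _ hy => rw [map_inv₀, hy]
  | mul y z _ _ hy hz => rw [map_mul, hy, hz]

/-- In an algebraically closed algebraic extension, any two conjugate elements are related by
an automorphism. -/
lemma aux_exists_conj {K Ω : Type*} [Field K] [Field Ω] [Algebra K Ω] [IsAlgClosed Ω]
    [Algebra.IsAlgebraic K Ω] (x y : Ω) (hy : aeval y (minpoly K x) = 0) :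
    ∃ σ : Ω ≃ₐ[K] Ω, σ x = y := by
  obtain ⟨φ, hφ⟩ := IntermediateField.exists_algHom_of_splits_of_aeval
    (fun s => ⟨(Algebra.IsAlgebraic.isAlgebraic s).isIntegral, IsAlgClosed.splits _⟩) hy
  exact ⟨AlgEquiv.ofBijective φ (Algebra.IsAlgebraic.algHom_bijective φ), hφ⟩


/-- Galois descent in an algebraically closed algebraic extension: an element fixed by all
automorphisms fixing an intermediate field `E` pointwise lies in `E`. -/
lemma aux_mem_of_fixed {F Ω : Type*} [Field F] [CharZero F] [Field Ω] [Algebra F Ω]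
    [IsAlgClosed Ω] [Algebra.IsAlgebraic F Ω]
    (E : IntermediateField F Ω) (x : Ω)
    (h : ∀ σ : Ω ≃ₐ[F] Ω, (∀ y ∈ E, σ y = y) → σ x = x) : x ∈ E := by
  classical
  haveI : CharZero Ω := charZero_of_injective_algebraMap (algebraMap F Ω).injective
  haveI : CharZero ↥E := charZero_of_injective_algebraMap (algebraMap F ↥E).injective
  haveI : Algebra.IsAlgebraic ↥E Ω := Algebra.IsAlgebraic.tower_top (K := F) ↥E
  by_contra hx
  set p := minpoly ↥E x with hp
  have hint : IsIntegral ↥E x := (Algebra.IsAlgebraic.isAlgebraic x).isIntegral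
  have hirr : Irreducible p := minpoly.irreducible hint
  have hsep : p.Separable := hirr.separable
  have hdeg : p.natDegree ≠ 1 := by
    intro h1
    apply hx
    obtain ⟨c, hc⟩ := minpoly.mem_range_of_degree_eq_one ↥E x
      (by rw [degree_eq_natDegree (minpoly.ne_zero hint), h1]; rfl)
    exact hc ▸ c.2
  have hdeg2 : 1 < (p.map (algebraMap ↥E Ω)).natDegree := by
    rw [natDegree_map]
    exact lt_of_le_of_ne (minpoly.natDegree_pos hint) (Ne.symm hdeg)
  -- roots of p in Ω
  have hmapne : p.map (algebraMap ↥E Ω) ≠ 0 :=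
    Polynomial.map_ne_zero (minpoly.ne_zero hint)
  have hcard : (p.map (algebraMap ↥E Ω)).roots.card = (p.map (algebraMap ↥E Ω)).natDegree := by
    rw [← Polynomial.Splits.natDegree_eq_card_roots (IsAlgClosed.splits (p.map (algebraMap ↥E Ω))), natDegree_map]
  have hxroot : x ∈ (p.map (algebraMap ↥E Ω)).roots := by
    rw [Polynomial.mem_roots hmapne, Polynomial.IsRoot, Polynomial.eval_map_algebraMap]
    exact minpoly.aeval ↥E x
  have hnodup : (p.map (algebraMap ↥E Ω)).roots.Nodup := Polynomial.nodup_roots hsep.map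
  -- find another root
  have herase : ((p.map (algebraMap ↥E Ω)).roots.erase x) ≠ 0 := by
    intro h0
    have := Multiset.card_erase_of_mem hxroot
    rw [h0] at this
    simp only [Multiset.card_zero, Nat.pred_eq_sub_one] at this
    omega
  obtain ⟨y, hy⟩ := Multiset.exists_mem_of_ne_zero herase
  have hyx : y ≠ x := (Multiset.Nodup.mem_erase_iff hnodup).mp hy |>.1
  have hyroot : y ∈ (p.map (algebraMap ↥E Ω)).roots := Multiset.mem_of_mem_erase hy
  have hyaeval : aeval y p = 0 := by
    rw [Polynomial.mem_roots hmapne, Polynomial.IsRoot, Polynomial.eval_map_algebraMap] at hyroot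
    exact hyroot
  obtain ⟨φ, hφ⟩ := IntermediateField.exists_algHom_of_splits_of_aeval
    (fun s => ⟨(Algebra.IsAlgebraic.isAlgebraic (R := ↥E) s).isIntegral,
      IsAlgClosed.splits _⟩) hyaeval
  set σ : Ω ≃ₐ[↥E] Ω := AlgEquiv.ofBijective φ (Algebra.IsAlgebraic.algHom_bijective φ) with hσ
  have hσx : σ x = y := hφ
  have hfix : ∀ z ∈ E, (σ.restrictScalars F) z = z := by
    intro z hz
    show σ z = z
    conv_lhs => rw [show z = algebraMap ↥E Ω ⟨z, hz⟩ from rfl]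
    rw [σ.commutes]
    rfl
  exact hyx (hσx ▸ h (σ.restrictScalars F) hfix)

/-- Roots of unity of order `lcm a b` lie in the base field if those of orders `a` and `b` do. -/
lemma aux_lcm_mem {F Ω : Type*} [Field F] [Field Ω] [Algebra F Ω] {a b : ℕ}
    (ha : 0 < a) (hb : 0 < b)
    (hA : ∀ ζ : Ω, ζ ^ a = 1 → ζ ∈ (⊥ : IntermediateField F Ω))
    (hB : ∀ ζ : Ω, ζ ^ b = 1 → ζ ∈ (⊥ : IntermediateField F Ω)) :
    ∀ ζ : Ω, ζ ^ Nat.lcm a b = 1 → ζ ∈ (⊥ : IntermediateField F Ω) := by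
  intro ζ hζ
  have hζ0 : ζ ≠ 0 := by
    intro h0
    rw [h0, zero_pow (Nat.pos_of_ne_zero ?_).ne'] at hζ
    · exact one_ne_zero hζ.symm
    · exact (Nat.lcm_pos ha hb).ne'
  set g := Nat.gcd a b with hg
  have hg0 : 0 < g := Nat.gcd_pos_of_pos_left b ha
  have h1 : (b / g) * a = Nat.lcm a b := by
    rw [Nat.lcm, mul_comm (b / g) a, ← Nat.mul_div_assoc a (Nat.gcd_dvd_right a b)]
  have h2 : (a / g) * b = Nat.lcm a b := by
    rw [Nat.lcm, mul_comm (a / g) b, ← Nat.mul_div_assoc b (Nat.gcd_dvd_left a b), mul_comm b a]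
  have hpow1 : ζ ^ (b / g) ∈ (⊥ : IntermediateField F Ω) := by
    apply hA
    rw [← pow_mul, h1, hζ]
  have hpow2 : ζ ^ (a / g) ∈ (⊥ : IntermediateField F Ω) := by
    apply hB
    rw [← pow_mul, h2, hζ]
  have hcop : Nat.Coprime (a / g) (b / g) := Nat.coprime_div_gcd_div_gcd hg0
  -- Bezout
  have hbez : ∃ x y : ℤ, (a / g : ℕ) * x + (b / g : ℕ) * y = 1 := by
    refine ⟨Nat.gcdA (a / g) (b / g), Nat.gcdB (a / g) (b / g), ?_⟩
    have := Nat.gcd_eq_gcd_ab (a / g) (b / g)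
    rw [hcop] at this
    push_cast at this ⊢
    omega
  obtain ⟨x, y, hxy⟩ := hbez
  have : ζ = (ζ ^ (a / g)) ^ x * (ζ ^ (b / g)) ^ y := by
    rw [← zpow_natCast ζ (a / g), ← zpow_natCast ζ (b / g), ← zpow_mul, ← zpow_mul,
      ← zpow_add₀ hζ0, hxy, zpow_one]
  rw [this]
  exact mul_mem (zpow_mem hpow2 x) (zpow_mem hpow1 y)


set_option maxHeartbeats 2000000 in
/-- Kummer-theoretic lemma: let `F` be a field of characteristic `0`, `u ∈ F*`, and `n ≥ 1`
such that `T^n − u` is irreducible over `F(μ_n)`.  Let `r` be an `n`-th root of `u` in an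
algebraic closure, so `F' = F(r)`, and let `m` be the maximal divisor of `n` with `μ_m ⊆ F`.
Then `F(r^{n/m}) = F(u^{1/m})` is the maximal abelian subextension of `F'/F`: it is an
abelian Galois subextension containing every abelian Galois subextension of `F'/F`. -/
theorem stmt7 (F : Type*) [Field F] [CharZero F] (n : ℕ) (hn : 0 < n)
    (u : F) (hu : u ≠ 0)
    (hirr : Irreducible ((X : Polynomial (adjoin F {x : AlgebraicClosure F | x ^ n = 1})) ^ n -
      C (algebraMap F (adjoin F {x : AlgebraicClosure F | x ^ n = 1}) u)))
    (r : AlgebraicClosure F) (hr : r ^ n = algebraMap F (AlgebraicClosure F) u)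
    (m : ℕ) (hmn : m ∣ n)
    (hm : ∀ ζ : AlgebraicClosure F, ζ ^ m = 1 →
      ζ ∈ (⊥ : IntermediateField F (AlgebraicClosure F)))
    (hmax : ∀ m' : ℕ, m' ∣ n →
      (∀ ζ : AlgebraicClosure F, ζ ^ m' = 1 →
        ζ ∈ (⊥ : IntermediateField F (AlgebraicClosure F))) →
      m' ≤ m) :
    adjoin F {r ^ (n / m)} ≤ adjoin F {r} ∧
    IsGalois F (adjoin F {r ^ (n / m)}) ∧
    (∀ σ τ : (adjoin F {r ^ (n / m)}) ≃ₐ[F] (adjoin F {r ^ (n / m)}), σ * τ = τ * σ) ∧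
    (∀ K : IntermediateField F (AlgebraicClosure F), K ≤ adjoin F {r} →
      IsGalois F K → (∀ σ τ : K ≃ₐ[F] K, σ * τ = τ * σ) →
      K ≤ adjoin F {r ^ (n / m)}) := by
  classical
  have hm0 : 0 < m := Nat.pos_of_dvd_of_pos hmn hn
  have hnm0 : 0 < n / m := Nat.div_pos (Nat.le_of_dvd hn hmn) hm0
  have hu0 : algebraMap F (AlgebraicClosure F) u ≠ 0 := fun h =>
    hu ((_root_.map_eq_zero _).mp h)
  have hr0 : r ≠ 0 := by
    intro h
    rw [h, zero_pow hn.ne'] at hr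
    exact hu0 hr.symm
  have hs : (r ^ (n / m)) ^ m = algebraMap F (AlgebraicClosure F) u := by
    rw [← pow_mul, Nat.div_mul_cancel hmn, hr]
  have hs0 : r ^ (n / m) ≠ 0 := pow_ne_zero _ hr0
  -- Part 1
  have part1 : adjoin F {r ^ (n / m)} ≤ adjoin F {r} := by
    rw [adjoin_le_iff]
    rw [Set.singleton_subset_iff]
    exact pow_mem (subset_adjoin F {r} rfl) (n / m)
  -- Part 2
  have hPsep : ((X : F[X]) ^ m - C u).Separable :=
    separable_X_pow_sub_C u (Nat.cast_ne_zero.mpr hm0.ne') hu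
  have hPne : ((X : F[X]) ^ m - C u) ≠ 0 := (monic_X_pow_sub_C u hm0.ne').ne_zero
  have hPsplit : (((X : F[X]) ^ m - C u).map (algebraMap F (AlgebraicClosure F))).Splits :=
    IsAlgClosed.splits _
  have hadj : adjoin F (((X : F[X]) ^ m - C u).rootSet (AlgebraicClosure F))
      = adjoin F {r ^ (n / m)} := by
    apply le_antisymm
    · rw [adjoin_le_iff]
      intro y hy
      rw [mem_rootSet] at hy
      have hym : y ^ m = algebraMap F (AlgebraicClosure F) u := by
        have := hy.2
        rw [map_sub, map_pow, aeval_X, aeval_C, sub_eq_zero] at this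
        exact this
      have hξ : (y / r ^ (n / m)) ^ m = 1 := by
        rw [div_pow, hym, hs, div_self hu0]
      have hmem : y / r ^ (n / m) ∈ adjoin F {r ^ (n / m)} :=
        (bot_le : ⊥ ≤ adjoin F {r ^ (n / m)}) (hm _ hξ)
      have : y = y / r ^ (n / m) * r ^ (n / m) := (div_mul_cancel₀ y hs0).symm
      rw [this]
      exact mul_mem hmem (subset_adjoin F _ rfl)
    · rw [adjoin_le_iff, Set.singleton_subset_iff]
      apply subset_adjoin
      rw [mem_rootSet]
      refine ⟨hPne, ?_⟩
      rw [map_sub, map_pow, aeval_X, aeval_C, hs, sub_self]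
  haveI hsf : IsSplittingField F (adjoin F {r ^ (n / m)}) ((X : F[X]) ^ m - C u) :=
    hadj ▸ adjoin_rootSet_isSplittingField hPsplit
  haveI part2 : IsGalois F (adjoin F {r ^ (n / m)}) :=
    IsGalois.of_separable_splitting_field hPsep
  -- Part 3
  have hsint : IsIntegral F (r ^ (n / m)) :=
    ⟨(X : F[X]) ^ m - C u, monic_X_pow_sub_C u hm0.ne', by
      rw [eval₂_sub, eval₂_pow, eval₂_X, eval₂_C, hs, sub_self]⟩
  have key3 : ∀ σ : (adjoin F {r ^ (n / m)}) ≃ₐ[F] (adjoin F {r ^ (n / m)}),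
      ∃ c : F, σ (AdjoinSimple.gen F (r ^ (n / m)))
        = algebraMap F _ c * AdjoinSimple.gen F (r ^ (n / m)) := by
    intro σ
    set g := AdjoinSimple.gen F (r ^ (n / m)) with hg
    have hgcoe : (g : AlgebraicClosure F) = r ^ (n / m) := rfl
    have hg0 : g ≠ 0 := by
      intro h0
      apply hs0
      rw [← hgcoe, h0]
      rfl
    have hgm : g ^ m = algebraMap F _ u := by
      apply Subtype.ext
      push_cast [hgcoe]
      exact hs
    have hσm : (σ g) ^ m = algebraMap F _ u := by
      rw [← map_pow, hgm, AlgEquiv.commutes]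
    have hq : ((σ g / g : adjoin F {r ^ (n / m)}) : AlgebraicClosure F) ^ m = 1 := by
      have : (σ g / g) ^ m = 1 := by
        rw [div_pow, hσm, hgm, div_self]
        intro h0
        apply hu
        have := congrArg (algebraMap (adjoin F {r ^ (n / m)}) (AlgebraicClosure F)) h0
        rw [← IsScalarTower.algebraMap_apply, map_zero] at this
        exact (_root_.map_eq_zero _).mp this
      calc ((σ g / g : adjoin F {r ^ (n / m)}) : AlgebraicClosure F) ^ m
          = (((σ g / g) ^ m : adjoin F {r ^ (n / m)}) : AlgebraicClosure F) := by push_cast; ring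
        _ = 1 := by rw [this]; rfl
    obtain ⟨c, hc⟩ := IntermediateField.mem_bot.mp (hm _ hq)
    refine ⟨c, ?_⟩
    have : (σ g / g : adjoin F {r ^ (n / m)}) = algebraMap F _ c := by
      apply Subtype.ext
      rw [← hc]
      rfl
    rw [← this, div_mul_cancel₀ _ hg0]
  have part3 : ∀ σ τ : (adjoin F {r ^ (n / m)}) ≃ₐ[F] (adjoin F {r ^ (n / m)}),
      σ * τ = τ * σ := by
    intro σ τ
    obtain ⟨c, hc⟩ := key3 σ
    obtain ⟨d, hd⟩ := key3 τ
    set pb := IntermediateField.adjoin.powerBasis hsint with hpb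
    have hgen : pb.gen = AdjoinSimple.gen F (r ^ (n / m)) := rfl
    have hkey : (σ * τ) pb.gen = (τ * σ) pb.gen := by
      rw [hgen, AlgEquiv.mul_apply, AlgEquiv.mul_apply, hc, hd, map_mul, map_mul,
        AlgEquiv.commutes, AlgEquiv.commutes, hc, hd]
      ring
    have h2 := PowerBasis.algHom_ext pb
      (show (σ * τ).toAlgHom pb.gen = (τ * σ).toAlgHom pb.gen from hkey)
    exact AlgEquiv.ext fun x => DFunLike.congr_fun h2 x
  refine ⟨part1, part2, part3, ?_⟩
  -- Part 4
  intro K hK hKgal hKab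
  haveI := hKgal
  haveI : CharZero (AlgebraicClosure F) :=
    charZero_of_injective_algebraMap (algebraMap F (AlgebraicClosure F)).injective
  haveI : NeZero n := ⟨hn.ne'⟩
  haveI : NeZero ((n : ℕ) : AlgebraicClosure F) := ⟨Nat.cast_ne_zero.mpr hn.ne'⟩
  obtain ⟨ζ, hζ⟩ := HasEnoughRootsOfUnity.exists_primitiveRoot (AlgebraicClosure F) n
  have hζ0 : ζ ≠ 0 := hζ.ne_zero hn.ne'
  have hrootL : ∀ η : AlgebraicClosure F, η ^ n = 1 →
      η ∈ adjoin F {x : AlgebraicClosure F | x ^ n = 1} := fun η h => subset_adjoin F _ h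
  have hζL : ζ ∈ adjoin F {x : AlgebraicClosure F | x ^ n = 1} := hrootL ζ hζ.pow_eq_one
  haveI : Algebra.IsAlgebraic (↥(adjoin F {x : AlgebraicClosure F | x ^ n = 1}))
      (AlgebraicClosure F) := Algebra.IsAlgebraic.tower_top (K := F) _
  have hmin : minpoly (↥(adjoin F {x : AlgebraicClosure F | x ^ n = 1})) r
      = X ^ n - C (algebraMap F _ u) := by
    refine (minpoly.eq_of_irreducible_of_monic hirr ?_ (monic_X_pow_sub_C _ hn.ne')).symm
    rw [map_sub, map_pow, aeval_X, aeval_C, ← IsScalarTower.algebraMap_apply, hr, sub_self]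
  have hζraeval : aeval (ζ * r)
      (minpoly (↥(adjoin F {x : AlgebraicClosure F | x ^ n = 1})) r) = 0 := by
    rw [hmin, map_sub, map_pow, aeval_X, aeval_C, ← IsScalarTower.algebraMap_apply,
      mul_pow, hζ.pow_eq_one, one_mul, hr, sub_self]
  obtain ⟨τ₀, hτ₀⟩ := aux_exists_conj r (ζ * r) hζraeval
  set T : AlgebraicClosure F ≃ₐ[F] AlgebraicClosure F := τ₀.restrictScalars F with hT
  have hTr : T r = ζ * r := hτ₀
  have hTfix : ∀ y ∈ adjoin F {x : AlgebraicClosure F | x ^ n = 1}, T y = y := by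
    intro y hy
    show τ₀ y = y
    conv_lhs => rw [show y = algebraMap (↥(adjoin F {x : AlgebraicClosure F | x ^ n = 1}))
      (AlgebraicClosure F) ⟨y, hy⟩ from rfl]
    rw [τ₀.commutes]
    rfl
  have hTkfix : ∀ k : ℕ, ∀ y ∈ adjoin F {x : AlgebraicClosure F | x ^ n = 1}, (T ^ k) y = y := by
    intro k
    induction k with
    | zero => intro y hy; rfl
    | succ k ih =>
      intro y hy
      rw [pow_succ, AlgEquiv.mul_apply, hTfix y hy]
      exact ih y hy
  have hTpow : ∀ k : ℕ, (T ^ k) r = ζ ^ k * r := by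
    intro k
    induction k with
    | zero => simp
    | succ k ih =>
      rw [pow_succ, AlgEquiv.mul_apply, hTr, map_mul, hTkfix k ζ hζL, ih]
      ring
  intro x hx
  apply aux_mem_of_fixed
  intro σ hσfix
  have hσs : σ (r ^ (n / m)) = r ^ (n / m) := hσfix _ (subset_adjoin F _ rfl)
  haveI : FiniteDimensional F (↥(adjoin F {r})) := by
    have hrint : IsIntegral F r := ⟨(X : F[X]) ^ n - C u, monic_X_pow_sub_C u hn.ne', by
      rw [eval₂_sub, eval₂_pow, eval₂_X, eval₂_C, hr, sub_self]⟩
    exact IntermediateField.adjoin.finiteDimensional hrint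
  haveI : FiniteDimensional F ↥K :=
    FiniteDimensional.of_injective (IntermediateField.inclusion hK).toLinearMap
      (fun a b hab => by
        apply Subtype.ext
        have h2 := congrArg Subtype.val hab
        simpa using h2)
  have resEq : ∀ σ₁ σ₂ : AlgebraicClosure F ≃ₐ[F] AlgebraicClosure F, σ₁ r = σ₂ r →
      AlgEquiv.restrictNormalHom ↥K σ₁ = AlgEquiv.restrictNormalHom ↥K σ₂ := by
    intro σ₁ σ₂ hre
    have hagree : ∀ z ∈ adjoin F {r}, σ₁ z = σ₂ z := by
      intro z hz
      have hfix2 : ∀ w ∈ adjoin F {r}, (σ₂⁻¹ * σ₁) w = w := by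
        apply aux_fix_adjoin
        intro y hy
        rw [Set.mem_singleton_iff] at hy
        rw [hy, AlgEquiv.mul_apply, hre]
        exact σ₂.symm_apply_apply r
      have h1 := hfix2 z hz
      rw [AlgEquiv.mul_apply] at h1
      have h2 := congrArg σ₂ h1
      rwa [show (σ₂⁻¹ : AlgebraicClosure F ≃ₐ[F] AlgebraicClosure F) = σ₂.symm from rfl,
        σ₂.apply_symm_apply] at h2
    refine AlgEquiv.ext fun k => Subtype.ext ?_
    rw [AlgEquiv.restrictNormalHom_apply K, AlgEquiv.restrictNormalHom_apply K]
    exact hagree _ (hK k.2)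
  set ρ := AlgEquiv.restrictNormalHom ↥K T with hρdef
  have hρn : ρ ^ n = 1 := by
    rw [hρdef, ← map_pow]
    have h1 : AlgEquiv.restrictNormalHom ↥K (T ^ n) = AlgEquiv.restrictNormalHom ↥K 1 :=
      resEq _ _ (by rw [hTpow n, hζ.pow_eq_one, one_mul, AlgEquiv.one_apply])
    rw [h1, map_one]
  have htn : orderOf ρ ∣ n := orderOf_dvd_of_pow_eq_one hρn
  have ht0 : 0 < orderOf ρ := orderOf_pos ρ
  have hζt : ζ ^ (n / orderOf ρ) ∈ (⊥ : IntermediateField F (AlgebraicClosure F)) := by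
    apply aux_mem_of_fixed
    intro τ _
    have h1 : (τ ζ) ^ n = 1 := by rw [← map_pow, hζ.pow_eq_one, map_one]
    obtain ⟨c, hcn, hc⟩ := hζ.eq_pow_of_pow_eq_one h1
    have hτr0 : τ r ≠ 0 := fun h0 => hr0 (τ.injective (by rw [h0, map_zero]))
    have hτsr : (τ.symm r) ^ n = r ^ n := by
      rw [← map_pow, hr, AlgEquiv.commutes]
    have hη : (τ.symm r * r⁻¹) ^ n = 1 := by
      rw [mul_pow, inv_pow, hτsr, mul_inv_cancel₀ (pow_ne_zero n hr0)]
    have hηL := hrootL _ hη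
    have hAr : (τ * T * τ⁻¹) r = ζ ^ c * r := by
      rw [AlgEquiv.mul_apply, AlgEquiv.mul_apply,
        show (τ⁻¹ : AlgebraicClosure F ≃ₐ[F] AlgebraicClosure F) = τ.symm from rfl]
      rw [show τ.symm r = τ.symm r * r⁻¹ * r by field_simp]
      rw [map_mul, hTfix _ hηL, hTr, map_mul, map_mul, map_mul, τ.apply_symm_apply,
        map_inv₀, ← hc]
      field_simp
    have hres2 : AlgEquiv.restrictNormalHom ↥K (τ * T * τ⁻¹)
        = AlgEquiv.restrictNormalHom ↥K (T ^ c) := resEq _ _ (by rw [hAr, hTpow])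
    have hρc : ρ ^ c = ρ := by
      rw [map_mul, map_mul, map_inv, map_pow] at hres2
      have habel : AlgEquiv.restrictNormalHom ↥K τ * ρ * (AlgEquiv.restrictNormalHom ↥K τ)⁻¹
          = ρ := by
        rw [hKab (AlgEquiv.restrictNormalHom ↥K τ) ρ, mul_assoc, mul_inv_cancel, mul_one]
      rw [← hρdef] at hres2
      rw [habel] at hres2
      exact hres2.symm
    have hzc : ρ ^ ((c : ℤ) - 1) = 1 := by
      rw [zpow_sub, zpow_natCast, zpow_one, hρc]
      simp
    have htc : (orderOf ρ : ℤ) ∣ (c : ℤ) - 1 := orderOf_dvd_iff_zpow_eq_one.mpr hzc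
    rw [map_pow, ← hc, ← pow_mul]
    have hdvd : (n : ℤ) ∣ (c : ℤ) * ((n / orderOf ρ : ℕ) : ℤ) - ((n / orderOf ρ : ℕ) : ℤ) := by
      obtain ⟨k, hk⟩ := htc
      have e : (c : ℤ) * ((n / orderOf ρ : ℕ) : ℤ) - ((n / orderOf ρ : ℕ) : ℤ)
          = ((c : ℤ) - 1) * ((n / orderOf ρ : ℕ) : ℤ) := by ring
      have e2 : (orderOf ρ : ℤ) * ((n / orderOf ρ : ℕ) : ℤ) = (n : ℤ) := by
        exact_mod_cast congrArg (Nat.cast : ℕ → ℤ) (Nat.mul_div_cancel' htn)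
      rw [e, hk]
      exact ⟨k, by rw [← e2]; ring⟩
    have hz1 : ζ ^ (((c * (n / orderOf ρ) : ℕ) : ℤ) - ((n / orderOf ρ : ℕ) : ℤ)) = 1 := by
      rw [hζ.zpow_eq_one_iff_dvd]
      push_cast
      push_cast at hdvd
      exact hdvd
    rw [zpow_sub₀ hζ0] at hz1
    have h2 := (div_eq_one_iff_eq (zpow_ne_zero _ hζ0)).mp hz1
    rw [zpow_natCast, zpow_natCast] at h2
    exact h2
  have hμt : ∀ ξ : AlgebraicClosure F, ξ ^ orderOf ρ = 1 →
      ξ ∈ (⊥ : IntermediateField F (AlgebraicClosure F)) := by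
    intro ξ hξt
    haveI : NeZero (orderOf ρ) := ⟨ht0.ne'⟩
    have hprim : IsPrimitiveRoot (ζ ^ (n / orderOf ρ)) (orderOf ρ) :=
      hζ.pow hn (Nat.div_mul_cancel htn).symm
    obtain ⟨i, -, hi⟩ := hprim.eq_pow_of_pow_eq_one hξt
    rw [← hi]
    exact pow_mem hζt i
  have htm : orderOf ρ ∣ m := by
    have hlcmn : Nat.lcm (orderOf ρ) m ∣ n := Nat.lcm_dvd htn hmn
    have h1 : Nat.lcm (orderOf ρ) m ≤ m := hmax _ hlcmn (aux_lcm_mem ht0 hm0 hμt hm)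
    have h2 : m ∣ Nat.lcm (orderOf ρ) m := Nat.dvd_lcm_right _ m
    have heq : Nat.lcm (orderOf ρ) m = m :=
      Nat.le_antisymm h1 (Nat.le_of_dvd (Nat.lcm_pos ht0 hm0) h2)
    exact heq ▸ Nat.dvd_lcm_left (orderOf ρ) m
  have hσrn : (σ r) ^ n = r ^ n := by
    rw [← map_pow, hr, AlgEquiv.commutes]
  have hσru : (σ r * r⁻¹) ^ n = 1 := by
    rw [mul_pow, inv_pow, hσrn, mul_inv_cancel₀ (pow_ne_zero n hr0)]
  have hσrs : (σ r * r⁻¹) ^ (n / m) = 1 := by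
    have h1 : (σ r) ^ (n / m) = r ^ (n / m) := by rw [← map_pow]; exact hσs
    rw [mul_pow, inv_pow, h1, mul_inv_cancel₀ hs0]
  obtain ⟨e, -, he⟩ := hζ.eq_pow_of_pow_eq_one hσru
  have hme : m ∣ e := by
    have h1 : ζ ^ (e * (n / m)) = 1 := by rw [pow_mul, he, hσrs]
    have h2 : n ∣ e * (n / m) := (hζ.pow_eq_one_iff_dvd _).mp h1
    obtain ⟨k, hk⟩ := h2
    have hnm : m * (n / m) = n := Nat.mul_div_cancel' hmn
    have h3 : e * (n / m) = m * k * (n / m) := by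
      rw [hk]
      conv_rhs => rw [mul_comm m k, mul_assoc, hnm]
      ring
    exact ⟨k, Nat.eq_of_mul_eq_mul_right hnm0 h3⟩
  obtain ⟨k, hek⟩ := hme
  have hσr : σ r = ζ ^ (m * k) * r := by
    rw [← hek, he]
    field_simp
  have hres3 : AlgEquiv.restrictNormalHom ↥K σ = AlgEquiv.restrictNormalHom ↥K (T ^ (m * k)) :=
    resEq _ _ (by rw [hσr, hTpow])
  have hρm : ρ ^ m = 1 := orderOf_dvd_iff_pow_eq_one.mp htm
  have hresT : AlgEquiv.restrictNormalHom ↥K (T ^ (m * k)) = 1 := by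
    rw [map_pow, ← hρdef, pow_mul, hρm, one_pow]
  have hfinal : AlgEquiv.restrictNormalHom ↥K σ = 1 := hres3.trans hresT
  have hcomm := AlgEquiv.restrictNormalHom_apply K σ (⟨x, hx⟩ : ↥K)
  rw [hfinal] at hcomm
  simpa using hcomm.symm
end

section
/- Let V : B → A be a left exact functor between abelian categories and let 𝔠 = (Id_A ↓ V) be the comma category whose objects are triples (A, B, θ : A → V(B)). Then 𝔠 is an abelian category, and the injective objects of 𝔠 are exactly those of the form (I ⊕ V(J), J, pr : I ⊕ V(J) → V(J)) with I injective in A and J injective in B. Moreover, if A and B have enough injectives, then so does 𝔠. -/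
open CategoryTheory CategoryTheory.Limits ZeroObject

namespace Stmt16Aux



variable {A B : Type*} [Category A] [Category B] [Abelian A] [Abelian B]
  (V : B ⥤ A) [PreservesFiniteLimits V]

instance : HasFiniteLimits (Comma (𝟭 A) V) := ⟨fun _ _ _ => inferInstance⟩
instance : HasFiniteColimits (Comma (𝟭 A) V) := ⟨fun _ _ _ => inferInstance⟩

noncomputable instance presLimFst (J : Type*) [Category J] [HasLimitsOfShape J A]
    [HasLimitsOfShape J B] [PreservesLimitsOfShape J V] :
    PreservesLimitsOfShape J (Comma.fst (𝟭 A) V) :=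
  ⟨fun {F} => preservesLimit_of_preserves_limit_cone
    (Comma.coneOfPreservesIsLimit F (limit.isLimit _) (limit.isLimit _))
    (IsLimit.ofIsoLimit (limit.isLimit _) (Cones.ext (Iso.refl _) (by intro j; exact (Category.id_comp _).symm)))⟩

noncomputable instance presLimSnd (J : Type*) [Category J] [HasLimitsOfShape J A]
    [HasLimitsOfShape J B] [PreservesLimitsOfShape J V] :
    PreservesLimitsOfShape J (Comma.snd (𝟭 A) V) :=
  ⟨fun {F} => preservesLimit_of_preserves_limit_cone
    (Comma.coneOfPreservesIsLimit F (limit.isLimit _) (limit.isLimit _))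
    (IsLimit.ofIsoLimit (limit.isLimit _) (Cones.ext (Iso.refl _) (by intro j; exact (Category.id_comp _).symm)))⟩

noncomputable instance presColimFst (J : Type*) [Category J] [HasColimitsOfShape J A]
    [HasColimitsOfShape J B] : PreservesColimitsOfShape J (Comma.fst (𝟭 A) V) :=
  ⟨fun {F} => preservesColimit_of_preserves_colimit_cocone
    (Comma.coconeOfPreservesIsColimit F (colimit.isColimit _) (colimit.isColimit _))
    (IsColimit.ofIsoColimit (colimit.isColimit _) (Cocones.ext (Iso.refl _) (by intro j; exact Category.comp_id _)))⟩

noncomputable instance presColimSnd (J : Type*) [Category J] [HasColimitsOfShape J A]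
    [HasColimitsOfShape J B] : PreservesColimitsOfShape J (Comma.snd (𝟭 A) V) :=
  ⟨fun {F} => preservesColimit_of_preserves_colimit_cocone
    (Comma.coconeOfPreservesIsColimit F (colimit.isColimit _) (colimit.isColimit _))
    (IsColimit.ofIsoColimit (colimit.isColimit _) (Cocones.ext (Iso.refl _) (by intro j; exact Category.comp_id _)))⟩

instance : V.Additive := Functor.additive_of_preserves_binary_products V



variable {V}

/-- Componentwise addition of morphisms in the comma category. -/
def commaAdd {X Y : Comma (𝟭 A) V} (f g : X ⟶ Y) : X ⟶ Y where
  left := f.left + g.left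
  right := f.right + g.right
  w := by
    have hf := f.w
    have hg := g.w
    simp only [Functor.id_map] at hf hg ⊢
    rw [V.map_add, Preadditive.add_comp, Preadditive.comp_add, hf, hg]

def commaNeg {X Y : Comma (𝟭 A) V} (f : X ⟶ Y) : X ⟶ Y where
  left := -f.left
  right := -f.right
  w := by
    have hf := f.w
    simp only [Functor.id_map] at hf ⊢
    rw [V.map_neg, Preadditive.neg_comp, Preadditive.comp_neg, hf]

def commaZero (X Y : Comma (𝟭 A) V) : X ⟶ Y where
  left := 0
  right := 0
  w := by simp

lemma commaAdd_assoc {X Y : Comma (𝟭 A) V} (f g h : X ⟶ Y) :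
    commaAdd (commaAdd f g) h = commaAdd f (commaAdd g h) := by
  apply CommaMorphism.ext <;> simp [commaAdd, add_assoc]

lemma commaZero_add {X Y : Comma (𝟭 A) V} (f : X ⟶ Y) :
    commaAdd (commaZero X Y) f = f := by
  apply CommaMorphism.ext <;> simp [commaAdd, commaZero]

lemma commaAdd_zero {X Y : Comma (𝟭 A) V} (f : X ⟶ Y) :
    commaAdd f (commaZero X Y) = f := by
  apply CommaMorphism.ext <;> simp [commaAdd, commaZero]

lemma commaAdd_comm {X Y : Comma (𝟭 A) V} (f g : X ⟶ Y) :
    commaAdd f g = commaAdd g f := by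
  apply CommaMorphism.ext <;> simp [commaAdd, add_comm]

lemma commaNeg_add_cancel {X Y : Comma (𝟭 A) V} (f : X ⟶ Y) :
    commaAdd (commaNeg f) f = commaZero X Y := by
  apply CommaMorphism.ext <;> simp [commaAdd, commaNeg, commaZero]

def commaHomGroup (X Y : Comma (𝟭 A) V) : AddCommGroup (X ⟶ Y) :=
  letI : Zero (X ⟶ Y) := ⟨commaZero X Y⟩
  letI : Add (X ⟶ Y) := ⟨commaAdd⟩
  letI : Neg (X ⟶ Y) := ⟨commaNeg⟩
  { add := (· + ·)
    zero := 0
    neg := (- ·)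
    sub := fun a b => a + -b
    sub_eq_add_neg := fun _ _ => rfl
    add_assoc := commaAdd_assoc
    zero_add := commaZero_add
    add_zero := commaAdd_zero
    add_comm := commaAdd_comm
    neg_add_cancel := commaNeg_add_cancel
    nsmul := nsmulRec
    zsmul := zsmulRec }

instance commaPreadditive : Preadditive (Comma (𝟭 A) V) where
  homGroup := commaHomGroup
  add_comp P Q R f f' g := by
    show commaAdd f f' ≫ g = commaAdd (f ≫ g) (f' ≫ g)
    apply CommaMorphism.ext <;> simp [commaAdd]
  comp_add P Q R f g g' := by
    show f ≫ commaAdd g g' = commaAdd (f ≫ g) (f ≫ g')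
    apply CommaMorphism.ext <;> simp [commaAdd]

@[simp] lemma add_left {X Y : Comma (𝟭 A) V} (f g : X ⟶ Y) :
    (f + g).left = f.left + g.left := rfl
@[simp] lemma add_right {X Y : Comma (𝟭 A) V} (f g : X ⟶ Y) :
    (f + g).right = f.right + g.right := rfl
@[simp] lemma zero_left (X Y : Comma (𝟭 A) V) : (0 : X ⟶ Y).left = 0 := rfl
@[simp] lemma zero_right (X Y : Comma (𝟭 A) V) : (0 : X ⟶ Y).right = 0 := rfl



noncomputable section Generic

variable {C : Type*} [Category C] [HasZeroMorphisms C] [HasKernels C] [HasCokernels C]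
  {D : Type*} [Category D] [HasZeroMorphisms D] [HasKernels D] [HasCokernels D]
  (G : C ⥤ D) [G.PreservesZeroMorphisms]
  [PreservesLimitsOfShape WalkingParallelPair G]
  [PreservesColimitsOfShape WalkingParallelPair G]
  {X Y : C} (f : X ⟶ Y)

/-- The abelian coimage is preserved by a functor preserving kernels and cokernels. -/
def coimageObjIso : G.obj (Abelian.coimage f) ≅ Abelian.coimage (G.map f) :=
  PreservesCokernel.iso G _ ≪≫
    cokernel.mapIso _ _ (PreservesKernel.iso G _) (Iso.refl _) (by
      simp only [Iso.refl_hom, Category.comp_id, PreservesKernel.iso_hom]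
      exact (kernelComparison_comp_ι f G).symm)

/-- The abelian image is preserved by a functor preserving kernels and cokernels. -/
def imageObjIso : G.obj (Abelian.image f) ≅ Abelian.image (G.map f) :=
  PreservesKernel.iso G _ ≪≫
    kernel.mapIso _ _ (Iso.refl _) (PreservesCokernel.iso G _) (by
      apply (cancel_mono (PreservesCokernel.iso G f).inv).1
      simp only [Category.assoc, Iso.hom_inv_id]
      simp only [Iso.refl_hom, PreservesCokernel.iso_inv, Category.id_comp, Category.comp_id]
      exact (π_comp_cokernelComparison f G).symm)

theorem coimageImageComparison_map :
    Abelian.coimageImageComparison (G.map f) =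
      (coimageObjIso G f).inv ≫ G.map (Abelian.coimageImageComparison f) ≫
        (imageObjIso G f).hom := by
  ext
  dsimp [imageObjIso, coimageObjIso, cokernel.map, kernel.mapIso, cokernel.mapIso, kernel.map]
  simp only [Abelian.coimage_image_factorisation, PreservesKernel.iso_hom, Category.assoc,
    kernel.lift_ι, Category.comp_id, PreservesCokernel.iso_inv,
    cokernel.π_desc_assoc, Category.id_comp]
  rw [kernelComparison_comp_ι (cokernel.π f) G, π_comp_cokernelComparison_assoc (kernel.ι f) G,
    ← G.map_comp, ← G.map_comp, Abelian.coimage_image_factorisation]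

theorem map_coimageImageComparison :
    G.map (Abelian.coimageImageComparison f) =
      (coimageObjIso G f).hom ≫ Abelian.coimageImageComparison (G.map f) ≫
        (imageObjIso G f).inv := by
  simp [coimageImageComparison_map G f]

theorem isIso_map_coimageImageComparison
    (h : IsIso (Abelian.coimageImageComparison (G.map f))) :
    IsIso (G.map (Abelian.coimageImageComparison f)) := by
  rw [map_coimageImageComparison G f]
  infer_instance

end Generic


section Comma2

variable {A B : Type*} [Category A] [Category B] [Abelian A] [Abelian B]
  {V : B ⥤ A} [PreservesFiniteLimits V]

instance : (Comma.fst (𝟭 A) V).PreservesZeroMorphisms := ⟨fun _ _ => rfl⟩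
instance : (Comma.snd (𝟭 A) V).PreservesZeroMorphisms := ⟨fun _ _ => rfl⟩

lemma isIso_of_components {X Y : Comma (𝟭 A) V} (f : X ⟶ Y)
    (hl : IsIso f.left) (hr : IsIso f.right) : IsIso f := by
  refine ⟨⟨⟨inv f.left, inv f.right, ?_⟩, ?_, ?_⟩⟩
  · have hw := f.w
    simp only [Functor.id_map] at hw ⊢
    rw [IsIso.inv_comp_eq, ← Category.assoc, hw, Category.assoc, ← V.map_comp,
      IsIso.hom_inv_id, V.map_id, Category.comp_id]
  · apply CommaMorphism.ext <;> simp
  · apply CommaMorphism.ext <;> simp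

noncomputable def commaAbelian : Abelian (Comma (𝟭 A) V) := by
  haveI : ∀ {X Y : Comma (𝟭 A) V} (f : X ⟶ Y),
      IsIso (Abelian.coimageImageComparison f) := by
    intro X Y f
    apply isIso_of_components
    · exact isIso_map_coimageImageComparison (Comma.fst (𝟭 A) V) f inferInstance
    · exact isIso_map_coimageImageComparison (Comma.snd (𝟭 A) V) f inferInstance
  exact Abelian.ofCoimageImageComparisonIsIso

end Comma2

section Inj


variable {A B : Type*} [Category A] [Category B] [Abelian A] [Abelian B]
  {V : B ⥤ A} [PreservesFiniteLimits V]

lemma mono_left {X Y : Comma (𝟭 A) V} (m : X ⟶ Y) [Mono m] : Mono m.left :=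
  preserves_mono_of_preservesLimit (Comma.fst (𝟭 A) V) m

lemma mono_right {X Y : Comma (𝟭 A) V} (m : X ⟶ Y) [Mono m] : Mono m.right :=
  preserves_mono_of_preservesLimit (Comma.snd (𝟭 A) V) m

lemma mono_of_components {X Y : Comma (𝟭 A) V} (m : X ⟶ Y)
    (hl : Mono m.left) (hr : Mono m.right) : Mono m := by
  constructor
  intro Z g h e
  apply CommaMorphism.ext
  · exact (cancel_mono m.left).1 (congrArg CommaMorphism.left e)
  · exact (cancel_mono m.right).1 (congrArg CommaMorphism.right e)

/-- `(I ⊞ V J, J, pr₂)` is injective whenever `I` and `J` are. -/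
lemma injective_mk {I : A} {J : B} (hI : Injective I) (hJ : Injective J) :
    Injective (⟨I ⊞ V.obj J, J, (biprod.snd : I ⊞ V.obj J ⟶ V.obj J)⟩ : Comma (𝟭 A) V) := by
  constructor
  intro Y Y' f m hm
  haveI := mono_left m
  haveI := mono_right m
  obtain ⟨g₂, hg₂⟩ := hJ.factors f.right m.right
  obtain ⟨h, hh⟩ := hI.factors (f.left ≫ biprod.fst) m.left
  have hfw := f.w
  have hmw := m.w
  simp only [Functor.id_map] at hfw hmw
  refine ⟨⟨biprod.lift h (Y'.hom ≫ V.map g₂), g₂, by simp⟩, ?_⟩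
  apply CommaMorphism.ext
  · show m.left ≫ biprod.lift h (Y'.hom ≫ V.map g₂) = f.left
    apply biprod.hom_ext
    · simpa using hh
    · show (m.left ≫ biprod.lift h (Y'.hom ≫ V.map g₂)) ≫ biprod.snd = f.left ≫ biprod.snd
      rw [Category.assoc, biprod.lift_snd, ← Category.assoc, hmw, Category.assoc,
        ← V.map_comp, hg₂]
      exact hfw.symm
  · exact hg₂

/-- An injective object of the comma category has injective second component. -/
lemma injective_right {X : Comma (𝟭 A) V} (hX : Injective X) : Injective X.right := by
  constructor
  intro B' B'' f m hm
  let jB' : Comma (𝟭 A) V := ⟨(0 : A), B', 0⟩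
  let jB'' : Comma (𝟭 A) V := ⟨(0 : A), B'', 0⟩
  let jm : jB' ⟶ jB'' := ⟨𝟙 (0 : A), m, by simp [jB', jB'']⟩
  haveI : Mono jm := mono_of_components _ (inferInstanceAs (Mono (𝟙 (0 : A)))) (by simpa [jm] using hm)
  obtain ⟨ψ, hψ⟩ := hX.factors (⟨0, f, by simp [jB']⟩ : jB' ⟶ X) jm
  exact ⟨ψ.right, congrArg CommaMorphism.right hψ⟩

/-- An injective object of the comma category has injective kernel of its structure map. -/
lemma injective_kernel {X : Comma (𝟭 A) V} (hX : Injective X) :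
    Injective (kernel X.hom) := by
  constructor
  intro A' A'' f m hm
  let iA' : Comma (𝟭 A) V := ⟨A', (0 : B), 0⟩
  let iA'' : Comma (𝟭 A) V := ⟨A'', (0 : B), 0⟩
  let im : iA' ⟶ iA'' := ⟨m, 𝟙 (0 : B), by simp [iA', iA'']⟩
  haveI : Mono im := mono_of_components _ (by simpa [im] using hm)
    (inferInstanceAs (Mono (𝟙 (0 : B))))
  obtain ⟨ψ, hψ⟩ := hX.factors
    (⟨f ≫ kernel.ι X.hom, 0, by simp [kernel.condition]⟩ : iA' ⟶ X) im
  have hw : ψ.left ≫ X.hom = 0 := by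
    have := ψ.w
    simp only [Functor.id_map] at this
    rw [this]
    show (0 : iA''.left ⟶ V.obj (0 : B)) ≫ V.map ψ.right = 0
    simp
  refine ⟨kernel.lift X.hom ψ.left hw, ?_⟩
  have h1 : m ≫ ψ.left = f ≫ kernel.ι X.hom := congrArg CommaMorphism.left hψ
  rw [← cancel_mono (kernel.ι X.hom), Category.assoc, kernel.lift_ι, h1]

/-- The structure map of an injective object of the comma category is split epi. -/
lemma hom_split {X : Comma (𝟭 A) V} (hX : Injective X) :
    ∃ s : V.obj X.right ⟶ X.left, s ≫ X.hom = 𝟙 (V.obj X.right) := by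
  let jX : Comma (𝟭 A) V := ⟨(0 : A), X.right, 0⟩
  let T : Comma (𝟭 A) V := ⟨V.obj X.right, X.right, 𝟙 (V.obj X.right)⟩
  let μ : jX ⟶ T := ⟨0, 𝟙 X.right, by simp [jX, T]⟩
  haveI : Mono μ := by
    refine mono_of_components _ ?_ (by simpa [μ] using inferInstanceAs (Mono (𝟙 X.right)))
    constructor
    intro Z g h _
    exact (isZero_zero A).eq_of_tgt g h
  obtain ⟨ψ, hψ⟩ := hX.factors (⟨0, 𝟙 X.right, by simp [jX]⟩ : jX ⟶ X) μ
  have hr : ψ.right = 𝟙 X.right := by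
    have := congrArg CommaMorphism.right hψ
    exact (Category.id_comp _).symm.trans this
  have hw := ψ.w
  simp only [Functor.id_map] at hw
  refine ⟨ψ.left, ?_⟩
  rw [hw]
  show 𝟙 (V.obj X.right) ≫ V.map ψ.right = 𝟙 _
  rw [hr, V.map_id, Category.id_comp]

/-- The structure of injective objects in the comma category. -/
lemma injective_iff (X : Comma (𝟭 A) V) :
    Injective X ↔ ∃ (I : A) (J : B), Injective I ∧ Injective J ∧
      Nonempty (X ≅ ⟨I ⊞ V.obj J, J, (biprod.snd : I ⊞ V.obj J ⟶ V.obj J)⟩) := by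
  constructor
  · intro hX
    obtain ⟨s, hs⟩ := hom_split hX
    let θ : X.left ⟶ V.obj X.right := X.hom
    have hθ : ∀ {Z : A} (g : V.obj X.right ⟶ Z), X.hom ≫ g = θ ≫ g := fun _ => rfl
    let K : A := kernel θ
    let ι : K ⟶ X.left := kernel.ι θ
    have hsθ : s ≫ θ = 𝟙 (V.obj X.right) := hs
    have hcond : ι ≫ θ = 0 := kernel.condition θ
    have hfac : (𝟙 X.left - θ ≫ s) ≫ θ = 0 := by
      rw [Preadditive.sub_comp, Category.id_comp, Category.assoc, hsθ, Category.comp_id,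
        sub_self]
    let r : X.left ⟶ K := kernel.lift θ (𝟙 X.left - θ ≫ s) hfac
    have hrι : r ≫ ι = 𝟙 X.left - θ ≫ s := kernel.lift_ι _ _ _
    let φ : X.left ⟶ K ⊞ V.obj X.right := biprod.lift r θ
    let ψ : K ⊞ V.obj X.right ⟶ X.left := biprod.desc ι s
    have hιr : ι ≫ r = 𝟙 K := by
      rw [← cancel_mono ι, Category.assoc, hrι, Preadditive.comp_sub, Category.comp_id,
        ← Category.assoc, hcond, zero_comp, sub_zero, Category.id_comp]
    have hsr : s ≫ r = 0 := by
      rw [← cancel_mono ι, Category.assoc, hrι, Preadditive.comp_sub, Category.comp_id,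
        ← Category.assoc, hsθ, Category.id_comp, sub_self, zero_comp]
    have h1 : φ ≫ ψ = 𝟙 X.left := by
      show biprod.lift r θ ≫ biprod.desc ι s = 𝟙 X.left
      rw [biprod.lift_desc, hrι, sub_add_cancel]
    have h2 : ψ ≫ φ = 𝟙 (K ⊞ V.obj X.right) := by
      apply biprod.hom_ext' <;> apply biprod.hom_ext <;>
        simp [φ, ψ, hιr, hsr, hsθ, hcond]
    haveI : IsIso φ := ⟨ψ, h1, h2⟩
    refine ⟨K, X.right, injective_kernel hX, injective_right hX,
      ⟨Comma.isoMk (asIso φ) (Iso.refl X.right) ?_⟩⟩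
    show φ ≫ biprod.snd = X.hom ≫ V.map (𝟙 X.right)
    rw [V.map_id, Category.comp_id]
    exact biprod.lift_snd r θ
  · rintro ⟨I, J, hI, hJ, ⟨e⟩⟩
    exact Injective.of_iso e.symm (injective_mk hI hJ)

/-- The comma category has enough injectives. -/
lemma commaEnoughInjectives (hA : EnoughInjectives A) (hB : EnoughInjectives B) :
    EnoughInjectives (Comma (𝟭 A) V) := by
  constructor
  intro X
  refine ⟨⟨⟨Injective.under X.left ⊞ V.obj (Injective.under X.right), Injective.under X.right,
      (biprod.snd : _ ⟶ V.obj (Injective.under X.right))⟩,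
    injective_mk (Injective.injective_under X.left) (Injective.injective_under X.right),
    ⟨biprod.lift (Injective.ι X.left) (X.hom ≫ V.map (Injective.ι X.right)),
      Injective.ι X.right, by simp⟩, ?_⟩⟩
  apply mono_of_components
  · show Mono (biprod.lift (Injective.ι X.left) (X.hom ≫ V.map (Injective.ι X.right)))
    have : Mono (biprod.lift (Injective.ι X.left)
        (X.hom ≫ V.map (Injective.ι X.right)) ≫ biprod.fst) := by
      rw [biprod.lift_fst]
      infer_instance
    exact mono_of_mono _ biprod.fst
  · show Mono (Injective.ι X.right)
    infer_instance


end Inj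

end Stmt16Aux

set_option linter.unusedSectionVars false

/-- Let `V : B ⥤ A` be a left exact functor between abelian categories, and let
`𝔠 = (Id_A ↓ V)` be the comma category with objects `(A, B, θ : A → V(B))`.  Then
`𝔠` is abelian; the injective objects of `𝔠` are exactly those isomorphic to one of
the form `(I ⊕ V(J), J, pr : I ⊕ V(J) → V(J))` with `I` injective in `A` and `J`
injective in `B`; and if `A` and `B` have enough injectives, so does `𝔠`. -/
theorem stmt16 {A B : Type*} [Category A] [Category B] [Abelian A] [Abelian B]
    (V : B ⥤ A) [PreservesFiniteLimits V] :
    Nonempty (Abelian (Comma (𝟭 A) V)) ∧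
    (∀ X : Comma (𝟭 A) V, Injective X ↔
      ∃ (I : A) (J : B), Injective I ∧ Injective J ∧
        Nonempty (X ≅ ⟨I ⊞ V.obj J, J, (biprod.snd : I ⊞ V.obj J ⟶ V.obj J)⟩)) ∧
    (EnoughInjectives A → EnoughInjectives B → EnoughInjectives (Comma (𝟭 A) V)) :=
  ⟨⟨Stmt16Aux.commaAbelian⟩, Stmt16Aux.injective_iff,
    fun hA hB => Stmt16Aux.commaEnoughInjectives hA hB⟩
end
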